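/- Let H ∈ F_{q^m}^{(n−k)×n} be a parity-check matrix of a linear rank-metric code with minimum rank distance d, and let B' ∈ F_q^{n×s} be a matrix over the subfield with rank s ≤ d−1. Then the matrix H·B' ∈ F_{q^m}^{(n−k)×s} has F_{q^m}-rank s. -/

import Mathlib

open Matrix

noncomputable def extV {K L : Type} [Field K] [Field L] [Algebra K L]
    {m n : ℕ} (γ : Module.Basis (Fin m) K L) (v : Fin n → L) : Matrix (Fin m) (Fin n) K :=
  Matrix.of fun i j => γ.repr (v j) i

/-- let `H` be a full-rank parity-check matrix of a linear `[n,k,d]` rank-metric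
code over `F_{q^m}` (minimum rank distance `d`), and let `B' ∈ F_q^{n×s}` have rank
`s ≤ d-1`. Then `H·B' ∈ F_{q^m}^{(n-k)×s}` has `F_{q^m}`-rank `s`. -/
theorem rank_H_mul_subfield_matrix {q m n k d s : ℕ} (K L : Type) [Field K] [Fintype K]
    [Field L] [Fintype L] [Algebra K L] (hK : Fintype.card K = q) (hL : Fintype.card L = q ^ m)
    (γ : Module.Basis (Fin m) K L)
    (H : Matrix (Fin (n - k)) (Fin n) L) (hH : H.rank = n - k)
    (hd : ∀ v : Fin n → L, H.mulVec v = 0 → v ≠ 0 → d ≤ (extV γ v).rank)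
    (hd' : ∃ v : Fin n → L, H.mulVec v = 0 ∧ v ≠ 0 ∧ (extV γ v).rank = d)
    (B' : Matrix (Fin n) (Fin s) K) (hB' : B'.rank = s) (hs : s ≤ d - 1) :
    (H * B'.map (algebraMap K L)).rank = s := by
  rcases Nat.eq_zero_or_pos s with hs0 | hspos
  · subst hs0
    have h1 := (H * B'.map (algebraMap K L)).rank_le_card_width
    simpa using h1
  have hsd : s < d := by omega
  -- B' has injective mulVecLin
  have hB'inj : Function.Injective B'.mulVecLin := by
    rw [← LinearMap.ker_eq_bot, ← Submodule.finrank_eq_zero (R := K)]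
    have h1 := LinearMap.finrank_range_add_finrank_ker B'.mulVecLin
    have h2 : Module.finrank K (LinearMap.range B'.mulVecLin) = s := hB'
    have h3 : Module.finrank K (Fin s → K) = s := by simp
    omega
  set B := B'.map (algebraMap K L) with hB
  have hinj : Function.Injective (H * B).mulVecLin := by
    rw [← LinearMap.ker_eq_bot, eq_bot_iff]
    intro x hx
    simp only [LinearMap.mem_ker, Matrix.mulVecLin_apply] at hx
    rw [← Matrix.mulVec_mulVec] at hx
    -- v = B.mulVec x is a codeword
    have hv : B.mulVec x = 0 := by
      by_contra hvne
      have hdle := hd (B.mulVec x) hx hvne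
      -- extV γ (B.mulVec x) = extV γ x * B'ᵀ
      have hfac : extV γ (B.mulVec x) = extV γ x * B'.transpose := by
        ext i j
        simp only [extV, Matrix.of_apply, Matrix.mul_apply, Matrix.transpose_apply,
          Matrix.mulVec, dotProduct, hB, Matrix.map_apply]
        have : (∑ t, algebraMap K L (B' j t) * x t) = ∑ t, B' j t • x t := by
          simp [Algebra.smul_def]
        rw [this, map_sum, Finsupp.coe_finset_sum, Finset.sum_apply]
        refine Finset.sum_congr rfl fun t _ => ?_
        rw [_root_.map_smul]
        simp [mul_comm]
      have hle : (extV γ (B.mulVec x)).rank ≤ s := by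
        rw [hfac]
        calc (extV γ x * B'.transpose).rank ≤ (extV γ x).rank :=
              Matrix.rank_mul_le_left _ _
          _ ≤ Fintype.card (Fin s) := (extV γ x).rank_le_card_width
          _ = s := by simp
      omega
    -- now B.mulVec x = 0 implies x = 0
    have hx0 : x = 0 := by
      have hrow : ∀ i, B'.mulVec (fun t => γ.repr (x t) i) = 0 := by
        intro i
        funext j
        have hj : B.mulVec x j = 0 := by rw [hv]; rfl
        simp only [Matrix.mulVec, dotProduct, hB, Matrix.map_apply] at hj ⊢
        have : (∑ t, algebraMap K L (B' j t) * x t) = ∑ t, B' j t • x t := by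
          simp [Algebra.smul_def]
        rw [this] at hj
        have := congrArg (fun z => γ.repr z i) hj
        simp only [map_sum, _root_.map_smul, map_zero, Finsupp.coe_finset_sum,
          Finsupp.coe_smul, Finset.sum_apply, Pi.smul_apply, Finsupp.coe_zero,
          Pi.zero_apply, smul_eq_mul] at this
        simpa using this
      funext t
      have hrepr : γ.repr (x t) = 0 := by
        ext i
        have h0 := hrow i
        have : (fun t => γ.repr (x t) i) = 0 := by
          apply hB'inj
          simpa [Matrix.mulVecLin_apply] using h0
        exact congrFun this t
      have := γ.repr.injective (by rw [hrepr]; simp : γ.repr (x t) = γ.repr 0)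
      simpa using this
    simp [hx0]
  have : (H * B).rank = Module.finrank L (Fin s → L) :=
    LinearMap.finrank_range_of_inj hinj
  simpa using this
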